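/- arXiv:2509.14225 — 3 statements merged into one kernel-verified Lean document; each statement's English description precedes it below -/
import Mathlib

section
/- Let α > 1, let Σ be a symmetric positive definite m×m real matrix, and let μ, v ∈ ℝ^m. Then the Rényi divergence of order α between the Gaussian measures N(μ, Σ) and N(μ + v, Σ) equals (α/2)·vᵀΣ⁻¹v. -/
open MeasureTheory Matrix

/-- The density of the multivariate Gaussian distribution `N(μ, S)` on `ℝ^m`
(with respect to Lebesgue measure), for a covariance matrix `S`. -/
noncomputable def gaussianPdf {m : ℕ} (μ : Fin m → ℝ) (S : Matrix (Fin m) (Fin m) ℝ)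
    (x : Fin m → ℝ) : ℝ :=
  (Real.sqrt ((2 * Real.pi) ^ m * S.det))⁻¹ *
    Real.exp (-(1 / 2) * ((x - μ) ⬝ᵥ (S⁻¹ *ᵥ (x - μ))))

/-- The multivariate Gaussian measure `N(μ, S)` on `ℝ^m`. -/
noncomputable def gaussianMeasure {m : ℕ} (μ : Fin m → ℝ) (S : Matrix (Fin m) (Fin m) ℝ) :
    Measure (Fin m → ℝ) :=
  volume.withDensity fun x => ENNReal.ofReal (gaussianPdf μ S x)

/-- The Rényi divergence of order `α` between measures `P` and `Q`:
`D_α(P‖Q) = (α−1)⁻¹ log ∫ (dP/dQ)^α dQ`. -/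
noncomputable def renyiDiv {X : Type*} [MeasurableSpace X] (α : ℝ) (P Q : Measure X) : ℝ :=
  (α - 1)⁻¹ * Real.log (∫ x, (P.rnDeriv Q x).toReal ^ α ∂Q)

section aux

variable {m : ℕ}

lemma aux_dot_symm (M : Matrix (Fin m) (Fin m) ℝ) (hM : Mᵀ = M) (a b : Fin m → ℝ) :
    a ⬝ᵥ M *ᵥ b = b ⬝ᵥ M *ᵥ a := by
  rw [Matrix.dotProduct_mulVec, ← Matrix.mulVec_transpose, hM, dotProduct_comm]

lemma aux_symm_transpose {S : Matrix (Fin m) (Fin m) ℝ} (hS : S.PosDef) : Sᵀ = S := by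
  have := hS.1.eq
  rwa [Matrix.conjTranspose_eq_transpose_of_trivial] at this

lemma aux_inv_transpose_eq {S : Matrix (Fin m) (Fin m) ℝ} (hS : S.PosDef) : (S⁻¹)ᵀ = S⁻¹ := by
  rw [Matrix.transpose_nonsing_inv, aux_symm_transpose hS]

lemma aux_quad_continuous (S : Matrix (Fin m) (Fin m) ℝ) (w : Fin m → ℝ) :
    Continuous fun x : Fin m → ℝ => (x - w) ⬝ᵥ S⁻¹ *ᵥ (x - w) := by
  have hc : Continuous fun x : Fin m → ℝ => x - w := continuous_id.sub continuous_const
  exact hc.dotProduct ((continuous_const (y := S⁻¹)).matrix_mulVec hc)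

lemma aux_integral_exp_quad {S : Matrix (Fin m) (Fin m) ℝ} (hS : S.PosDef) :
    ∫ x : Fin m → ℝ, Real.exp (-(1 / 2) * (x ⬝ᵥ S⁻¹ *ᵥ x)) =
      Real.sqrt ((2 * Real.pi) ^ m * S.det) := by
  classical
  set B := (open scoped MatrixOrder in CFC.sqrt S) with hBdef
  have hBps : B.PosSemidef := by open scoped MatrixOrder in exact (CFC.sqrt_nonneg S).posSemidef
  have hBB : B * B = S := by
    open scoped MatrixOrder in exact CFC.sqrt_mul_sqrt_self S hS.posSemidef.nonneg
  have hBsymm : Bᵀ = B := by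
    have := hBps.1.eq
    rwa [Matrix.conjTranspose_eq_transpose_of_trivial] at this
  have hdetB : B.det * B.det = S.det := by rw [← Matrix.det_mul, hBB]
  have hSdet : 0 < S.det := hS.det_pos
  have hdetB_nonneg : 0 ≤ B.det := by
    rw [hBps.1.det_eq_prod_eigenvalues]
    exact Finset.prod_nonneg fun i _ => by simpa using hBps.eigenvalues_nonneg i
  have hdetB_pos : 0 < B.det := by
    rcases hdetB_nonneg.lt_or_eq with h | h
    · exact h
    · nlinarith
  have hdetB_sqrt : B.det = Real.sqrt S.det := by
    rw [← hdetB, Real.sqrt_mul_self hdetB_nonneg]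
  have hBdet_ne : IsUnit B.det := hdetB_pos.ne'.isUnit
  have hSinvB : S⁻¹ * B = B⁻¹ := by
    rw [← hBB, Matrix.mul_inv_rev, Matrix.mul_assoc, Matrix.nonsing_inv_mul B hBdet_ne,
      Matrix.mul_one]
  have hBinv_symm : (B⁻¹)ᵀ = B⁻¹ := by rw [Matrix.transpose_nonsing_inv, hBsymm]
  have hquad : ∀ z : Fin m → ℝ, (B *ᵥ z) ⬝ᵥ S⁻¹ *ᵥ (B *ᵥ z) = z ⬝ᵥ z := by
    intro z
    rw [Matrix.mulVec_mulVec, hSinvB, Matrix.dotProduct_mulVec, ← Matrix.mulVec_transpose,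
      hBinv_symm, Matrix.mulVec_mulVec, Matrix.nonsing_inv_mul B hBdet_ne, Matrix.one_mulVec]
  set f : (Fin m → ℝ) →ₗ[ℝ] Fin m → ℝ := Matrix.toLin' B with hfdef
  have hdetf : LinearMap.det f = B.det := LinearMap.det_toLin' B
  have hdetf_ne : LinearMap.det f ≠ 0 := by rw [hdetf]; exact hdetB_pos.ne'
  have hmap : Measure.map f volume = ENNReal.ofReal (|(LinearMap.det f)|⁻¹) • volume := by
    simpa [abs_inv] using Real.map_linearMap_volume_pi_eq_smul_volume_pi hdetf_ne
  set g : (Fin m → ℝ) → ℝ := fun x => Real.exp (-(1 / 2) * (x ⬝ᵥ S⁻¹ *ᵥ x)) with hgdef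
  have hg_cont : Continuous g := by
    have hc : Continuous fun x : Fin m → ℝ => x := continuous_id
    exact Real.continuous_exp.comp <| continuous_const.mul
      (hc.dotProduct ((continuous_const (y := S⁻¹)).matrix_mulVec hc))
  have key : ∫ z, g (f z) = ∫ z : Fin m → ℝ, Real.exp (-(1/2) * (z ⬝ᵥ z)) := by
    congr 1 with z
    simp only [hgdef, hfdef, Matrix.toLin'_apply, hquad]
  have key2 : ∫ z, g (f z) = (B.det)⁻¹ * ∫ x, g x := by
    rw [← integral_map (f.continuous_of_finiteDimensional.measurable.aemeasurable)
      (hg_cont.aestronglyMeasurable), hmap, integral_smul_measure]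
    rw [hdetf]
    rw [ENNReal.toReal_ofReal (by positivity)]
    rw [abs_of_pos hdetB_pos, smul_eq_mul]
  have gauss1 : ∫ z : Fin m → ℝ, Real.exp (-(1/2) * (z ⬝ᵥ z))
      = Real.sqrt (2 * Real.pi) ^ m := by
    have h1 : ∀ z : Fin m → ℝ, Real.exp (-(1/2) * (z ⬝ᵥ z))
        = ∏ i, Real.exp (-(1/2) * (z i * z i)) := by
      intro z
      rw [← Real.exp_sum]
      congr 1
      simp [dotProduct, Finset.mul_sum]
    simp_rw [h1]
    rw [MeasureTheory.integral_fintype_prod_volume_eq_pow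
      (fun t : ℝ => Real.exp (-(1/2) * (t * t)))]
    congr 1
    · have := integral_gaussian (1/2 : ℝ)
      simp_rw [← sq, neg_mul] at this ⊢
      rw [this]
      norm_num [mul_comm]
    · simp
  have hfin : ∫ x, g x = B.det * (Real.sqrt (2 * Real.pi) ^ m) := by
    rw [← gauss1, ← key, key2]
    field_simp
  rw [hgdef] at hfin
  have hsq : Real.sqrt (2 * Real.pi) ^ m = Real.sqrt ((2 * Real.pi) ^ m) := by
    rw [Real.sqrt_eq_rpow, Real.sqrt_eq_rpow, ← Real.rpow_natCast ((2*Real.pi) ^ ((1:ℝ)/2)) m,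
      ← Real.rpow_natCast (2*Real.pi) m, ← Real.rpow_mul (by positivity),
      ← Real.rpow_mul (by positivity)]
    ring_nf
  rw [hfin, hdetB_sqrt, hsq, ← Real.sqrt_mul (by positivity), mul_comm]

lemma aux_integral_exp_quad_shift {S : Matrix (Fin m) (Fin m) ℝ} (hS : S.PosDef)
    (w : Fin m → ℝ) :
    ∫ x : Fin m → ℝ, Real.exp (-(1 / 2) * ((x - w) ⬝ᵥ S⁻¹ *ᵥ (x - w))) =
      Real.sqrt ((2 * Real.pi) ^ m * S.det) := by
  rw [show (fun x : Fin m → ℝ => Real.exp (-(1 / 2) * ((x - w) ⬝ᵥ S⁻¹ *ᵥ (x - w))))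
      = (fun y : Fin m → ℝ => Real.exp (-(1 / 2) * (y ⬝ᵥ S⁻¹ *ᵥ y))) ∘ (fun x => x - w) from rfl]
  rw [show (∫ x : Fin m → ℝ, ((fun y : Fin m → ℝ => Real.exp (-(1 / 2) * (y ⬝ᵥ S⁻¹ *ᵥ y)))
      ∘ (fun x => x - w)) x) = ∫ x : Fin m → ℝ, Real.exp (-(1 / 2) * ((x - w) ⬝ᵥ S⁻¹ *ᵥ (x - w)))
      from rfl]
  rw [integral_sub_right_eq_self (fun y : Fin m → ℝ => Real.exp (-(1 / 2) * (y ⬝ᵥ S⁻¹ *ᵥ y))) w]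
  exact aux_integral_exp_quad hS

lemma aux_quad_identity {S : Matrix (Fin m) (Fin m) ℝ} (hS : S.PosDef) (α : ℝ)
    (μ v x : Fin m → ℝ) :
    α * ((x - μ) ⬝ᵥ S⁻¹ *ᵥ (x - μ)) + (1 - α) * ((x - (μ + v)) ⬝ᵥ S⁻¹ *ᵥ (x - (μ + v)))
      = (x - (μ + (1 - α) • v)) ⬝ᵥ S⁻¹ *ᵥ (x - (μ + (1 - α) • v))
        + α * (1 - α) * (v ⬝ᵥ S⁻¹ *ᵥ v) := by
  have hsymm := aux_dot_symm S⁻¹ (aux_inv_transpose_eq hS)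
  have h2 : x - (μ + v) = (x - μ) - v := by abel
  have h3 : x - (μ + (1 - α) • v) = (x - μ) - (1 - α) • v := by abel
  rw [h2, h3]
  set y := x - μ with hy
  simp only [sub_dotProduct, dotProduct_sub, Matrix.mulVec_sub, Matrix.mulVec_smul,
    smul_dotProduct, dotProduct_smul, smul_eq_mul]
  rw [hsymm v y]
  ring

end aux

/-- The Rényi divergence of order `α > 1` between the Gaussian measures `N(μ, S)` and
`N(μ + v, S)`, for a symmetric positive definite covariance `S`, equals `(α/2)·vᵀ S⁻¹ v`. -/
theorem renyiDiv_gaussian_gaussian_shift {m : ℕ} (α : ℝ) (hα : 1 < α)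
    (S : Matrix (Fin m) (Fin m) ℝ) (hS : S.PosDef) (μ v : Fin m → ℝ) :
    renyiDiv α (gaussianMeasure μ S) (gaussianMeasure (μ + v) S) =
      α / 2 * (v ⬝ᵥ (S⁻¹ *ᵥ v)) := by
  classical
  have hSdet : 0 < S.det := hS.det_pos
  set R := Real.sqrt ((2 * Real.pi) ^ m * S.det) with hRdef
  have hR_pos : 0 < R := Real.sqrt_pos.2 (by positivity)
  set c := R⁻¹ with hcdef
  have hc_pos : 0 < c := inv_pos.2 hR_pos
  set p := gaussianPdf μ S with hpdef
  set q := gaussianPdf (μ + v) S with hqdef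
  have hp_pos : ∀ x, 0 < p x := fun x => mul_pos hc_pos (Real.exp_pos _)
  have hq_pos : ∀ x, 0 < q x := fun x => mul_pos hc_pos (Real.exp_pos _)
  have hp_cont : Continuous p :=
    continuous_const.mul (Real.continuous_exp.comp (continuous_const.mul
      (aux_quad_continuous S μ)))
  have hq_cont : Continuous q :=
    continuous_const.mul (Real.continuous_exp.comp (continuous_const.mul
      (aux_quad_continuous S (μ + v))))
  set P := gaussianMeasure μ S with hPdef
  set Q := gaussianMeasure (μ + v) S with hQdef
  haveI hQsf : SigmaFinite Q := by
    rw [hQdef]; unfold gaussianMeasure; infer_instance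
  set h : (Fin m → ℝ) → ENNReal := fun x => ENNReal.ofReal (p x / q x) with hhdef
  have hh_meas : Measurable h :=
    ENNReal.measurable_ofReal.comp (hp_cont.div hq_cont fun x => (hq_pos x).ne').measurable
  have hq_meas : Measurable fun x => ENNReal.ofReal (q x) :=
    ENNReal.measurable_ofReal.comp hq_cont.measurable
  have hPQ : P = Q.withDensity h := by
    rw [hPdef, hQdef]
    unfold gaussianMeasure
    rw [← withDensity_mul _ hq_meas hh_meas]
    congr 1
    funext x
    show ENNReal.ofReal (p x) = ENNReal.ofReal (q x) * h x
    rw [hhdef, ← ENNReal.ofReal_mul (hq_pos x).le]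
    congr 1
    rw [mul_div_cancel₀ _ (hq_pos x).ne']
  have hrn : P.rnDeriv Q =ᵐ[Q] h := by
    rw [hPQ]
    exact Measure.rnDeriv_withDensity Q hh_meas
  -- rewrite the integral
  have hint1 : ∫ x, ((P.rnDeriv Q) x).toReal ^ α ∂Q = ∫ x, (p x / q x) ^ α ∂Q := by
    refine integral_congr_ae (hrn.mono fun x hx => ?_)
    dsimp only
    rw [hx, hhdef, ENNReal.toReal_ofReal (div_nonneg (hp_pos x).le (hq_pos x).le)]
  have hint2 : ∫ x, (p x / q x) ^ α ∂Q = ∫ x, q x * (p x / q x) ^ α := by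
    rw [hQdef]
    unfold gaussianMeasure
    rw [show (fun x => ENNReal.ofReal (gaussianPdf (μ + v) S x))
        = (fun x => ((Real.toNNReal (q x) : NNReal) : ENNReal)) from rfl]
    rw [integral_withDensity_eq_integral_smul (f := fun x => (q x).toNNReal)
      (measurable_real_toNNReal.comp hq_cont.measurable) _]
    congr 1
    funext x
    rw [NNReal.smul_def, Real.coe_toNNReal _ (hq_pos x).le, smul_eq_mul]
  -- pointwise computation
  set w := μ + (1 - α) • v with hwdef
  set Qv := v ⬝ᵥ S⁻¹ *ᵥ v with hQvdef
  have hpoint : ∀ x, q x * (p x / q x) ^ α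
      = c * Real.exp (α * (α - 1) / 2 * Qv)
        * Real.exp (-(1 / 2) * ((x - w) ⬝ᵥ S⁻¹ *ᵥ (x - w))) := by
    intro x
    set a₁ := -(1 / 2) * ((x - μ) ⬝ᵥ S⁻¹ *ᵥ (x - μ)) with ha1
    set a₂ := -(1 / 2) * ((x - (μ + v)) ⬝ᵥ S⁻¹ *ᵥ (x - (μ + v))) with ha2
    have hp_eq : p x = c * Real.exp a₁ := rfl
    have hq_eq : q x = c * Real.exp a₂ := rfl
    rw [hp_eq, hq_eq, mul_div_mul_left _ _ hc_pos.ne', ← Real.exp_sub]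
    rw [← Real.exp_log (x := (Real.exp (a₁ - a₂)) ^ α)
      (Real.rpow_pos_of_pos (Real.exp_pos _) α), Real.log_rpow (Real.exp_pos _), Real.log_exp]
    rw [mul_assoc, ← Real.exp_add]
    have hexp : a₂ + α * (a₁ - a₂)
        = -(1 / 2) * (α * ((x - μ) ⬝ᵥ S⁻¹ *ᵥ (x - μ))
            + (1 - α) * ((x - (μ + v)) ⬝ᵥ S⁻¹ *ᵥ (x - (μ + v)))) := by
      rw [ha1, ha2]; ring
    rw [hexp, aux_quad_identity hS α μ v x, ← hwdef, ← hQvdef]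
    rw [show -(1 / 2) * ((x - w) ⬝ᵥ S⁻¹ *ᵥ (x - w) + α * (1 - α) * Qv)
        = α * (α - 1) / 2 * Qv + -(1 / 2) * ((x - w) ⬝ᵥ S⁻¹ *ᵥ (x - w)) by ring]
    rw [Real.exp_add]
    ring
  have hint3 : ∫ x, q x * (p x / q x) ^ α = Real.exp (α * (α - 1) / 2 * Qv) := by
    simp_rw [hpoint]
    rw [integral_const_mul, aux_integral_exp_quad_shift hS w, ← hRdef]
    rw [hcdef]
    field_simp
  rw [renyiDiv, hint1, hint2, hint3, Real.log_exp]
  have hα1 : α - 1 ≠ 0 := sub_ne_zero.2 hα.ne'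
  field_simp
end

section
/- Let F be an m×m real matrix with F + Fᵀ negative semidefinite, L > 0, and Σ₀ a symmetric positive definite m×m matrix. Then for every t ≥ 0 the matrix Σ_t = L⁻¹I + exp(Ft)(Σ₀ − L⁻¹I)exp(Ft)ᵀ is symmetric positive definite. -/
open Matrix

section deriv
attribute [local instance] Matrix.linftyOpNormedRing Matrix.linftyOpNormedAlgebra

lemma entry_hasDerivAt {m : ℕ} (F : Matrix (Fin m) (Fin m) ℝ) (t : ℝ) (j i : Fin m) :
    HasDerivAt (fun u : ℝ => NormedSpace.exp (u • F) j i)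
      ((NormedSpace.exp (t • F) * F) j i) t :=
  (LinearMap.toContinuousLinearMap (Matrix.entryLinearMap ℝ ℝ j i)).hasFDerivAt.comp_hasDerivAt t
    (hasDerivAt_exp_smul_const F t)

end deriv

/-- quadratic form decay along the flow -/
lemma key_decay {m : ℕ} (F : Matrix (Fin m) (Fin m) ℝ)
    (hF : (-(F + Fᵀ)).PosSemidef) (x : Fin m → ℝ) {t : ℝ} (ht : 0 ≤ t) :
    (x ᵥ* NormedSpace.exp (t • F)) ⬝ᵥ (x ᵥ* NormedSpace.exp (t • F)) ≤ x ⬝ᵥ x := by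
  set g : ℝ → ℝ := fun u => (x ᵥ* NormedSpace.exp (u • F)) ⬝ᵥ (x ᵥ* NormedSpace.exp (u • F))
    with hg
  -- derivative of each component of w u := x ᵥ* exp(uF)
  have hv : ∀ (u : ℝ) (i : Fin m),
      HasDerivAt (fun s : ℝ => (x ᵥ* NormedSpace.exp (s • F)) i)
        ((x ᵥ* (NormedSpace.exp (u • F) * F)) i) u := by
    intro u i
    have hfe : (fun s : ℝ => (x ᵥ* NormedSpace.exp (s • F)) i)
        = fun s => ∑ j, x j * NormedSpace.exp (s • F) j i := by
      funext s; simp [vecMul, dotProduct]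
    rw [hfe]
    have : (x ᵥ* (NormedSpace.exp (u • F) * F)) i
        = ∑ j, x j * (NormedSpace.exp (u • F) * F) j i := by
      simp [vecMul, dotProduct]
    rw [this]
    exact HasDerivAt.fun_sum fun j _ => (entry_hasDerivAt F u j i).const_mul (x j)
  have hgderiv : ∀ u : ℝ, HasDerivAt g
      (-((x ᵥ* NormedSpace.exp (u • F)) ⬝ᵥ ((-(F + Fᵀ)) *ᵥ (x ᵥ* NormedSpace.exp (u • F))))) u := by
    intro u
    set w : Fin m → ℝ := x ᵥ* NormedSpace.exp (u • F) with hw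
    have h1 : HasDerivAt g (∑ i, ((x ᵥ* (NormedSpace.exp (u • F) * F)) i * w i
        + w i * (x ᵥ* (NormedSpace.exp (u • F) * F)) i)) u := by
      have hge : g = fun s => ∑ i, (x ᵥ* NormedSpace.exp (s • F)) i *
          (x ᵥ* NormedSpace.exp (s • F)) i := by
        funext s; simp [g, dotProduct]
      rw [hge]
      exact HasDerivAt.fun_sum fun i _ => (hv u i).mul (hv u i)
    convert h1 using 1
    have hwf : x ᵥ* (NormedSpace.exp (u • F) * F) = w ᵥ* F := by
      rw [hw, vecMul_vecMul]
    rw [hwf]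
    have e1 : ∑ i, ((w ᵥ* F) i * w i + w i * (w ᵥ* F) i)
        = (w ᵥ* F) ⬝ᵥ w + w ⬝ᵥ (w ᵥ* F) := by
      simp [dotProduct, Finset.sum_add_distrib]
    rw [e1]
    have e2 : (w ᵥ* F) ⬝ᵥ w = w ⬝ᵥ (F *ᵥ w) := (dotProduct_mulVec w F w).symm
    have e3 : w ⬝ᵥ (w ᵥ* F) = w ⬝ᵥ (Fᵀ *ᵥ w) := by
      rw [← mulVec_transpose]
    rw [e2, e3, ← dotProduct_add, ← add_mulVec]
    simp only [neg_mulVec, add_mulVec, dotProduct_neg, dotProduct_add, neg_add, neg_neg]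
  have hanti : AntitoneOn g (Set.Ici 0) := by
    apply antitoneOn_of_deriv_nonpos (convex_Ici 0)
    · intro u _
      exact (hgderiv u).continuousAt.continuousWithinAt
    · intro u _
      exact (hgderiv u).differentiableAt.differentiableWithinAt
    · intro u _
      rw [(hgderiv u).deriv]
      simp only [neg_nonpos]
      have := hF.dotProduct_mulVec_nonneg (x ᵥ* NormedSpace.exp (u • F))
      simpa using this
  have h0 : g 0 = x ⬝ᵥ x := by
    simp [g]
  calc g t ≤ g 0 := hanti (Set.mem_Ici.2 le_rfl) (Set.mem_Ici.2 ht) ht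
  _ = x ⬝ᵥ x := h0

/-- If `F + Fᵀ` is negative semidefinite, `L > 0`, and `Σ₀` is symmetric positive definite,
then `Σ_t = L⁻¹I + exp(Ft)(Σ₀ − L⁻¹I)exp(Ft)ᵀ` is symmetric positive definite for all `t ≥ 0`. -/
theorem sigmaT_posDef {m : ℕ} (F : Matrix (Fin m) (Fin m) ℝ)
    (hF : (-(F + Fᵀ)).PosSemidef) (L : ℝ) (hL : 0 < L)
    (S0 : Matrix (Fin m) (Fin m) ℝ) (hS0 : S0.PosDef) :
    ∀ t : ℝ, 0 ≤ t →
      (L⁻¹ • (1 : Matrix (Fin m) (Fin m) ℝ) +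
        NormedSpace.exp (t • F) * (S0 - L⁻¹ • 1) * (NormedSpace.exp (t • F))ᵀ).PosDef := by
  intro t ht
  set E := NormedSpace.exp (t • F) with hE
  have hB : (S0 - L⁻¹ • (1 : Matrix (Fin m) (Fin m) ℝ)).IsHermitian := by
    refine hS0.1.sub ?_
    simp [Matrix.IsHermitian]
  refine Matrix.posDef_iff_dotProduct_mulVec.2 ⟨?_, ?_⟩
  · refine Matrix.IsHermitian.add (by simp [Matrix.IsHermitian]) ?_
    show (E * (S0 - L⁻¹ • 1) * Eᵀ)ᴴ = _
    rw [conjTranspose_mul, conjTranspose_mul, hB.eq]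
    have h1 : (Eᵀ)ᴴ = E := by
      ext i j; simp [conjTranspose_apply]
    have h2 : Eᴴ = Eᵀ := by
      ext i j; simp [conjTranspose_apply]
    rw [h1, h2, Matrix.mul_assoc]
  · intro x hx
    set w : Fin m → ℝ := x ᵥ* E with hw
    have hwne : w ≠ 0 := by
      intro h
      apply hx
      have hU : IsUnit E := Matrix.isUnit_exp (t • F)
      have hinj := Matrix.vecMul_injective_iff_isUnit.2 hU
      apply hinj
      show x ᵥ* E = (0 : Fin m → ℝ) ᵥ* E
      rw [Matrix.zero_vecMul, ← hw, h]
    have hq : (star x) ⬝ᵥ ((L⁻¹ • (1 : Matrix (Fin m) (Fin m) ℝ) +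
        E * (S0 - L⁻¹ • 1) * Eᵀ) *ᵥ x)
        = L⁻¹ * (x ⬝ᵥ x - w ⬝ᵥ w) + w ⬝ᵥ (S0 *ᵥ w) := by
      rw [star_trivial, add_mulVec, dotProduct_add]
      have h1 : x ⬝ᵥ ((L⁻¹ • (1 : Matrix (Fin m) (Fin m) ℝ)) *ᵥ x) = L⁻¹ * (x ⬝ᵥ x) := by
        rw [Matrix.smul_mulVec, Matrix.one_mulVec, dotProduct_smul, smul_eq_mul]
      have h2 : x ⬝ᵥ ((E * (S0 - L⁻¹ • 1) * Eᵀ) *ᵥ x) = w ⬝ᵥ ((S0 - L⁻¹ • 1) *ᵥ w) := by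
        rw [← Matrix.mulVec_mulVec, ← Matrix.mulVec_mulVec, dotProduct_mulVec,
          Matrix.mulVec_transpose, ← hw]
      rw [h1, h2, Matrix.sub_mulVec, dotProduct_sub,
        Matrix.smul_mulVec, Matrix.one_mulVec, dotProduct_smul, smul_eq_mul]
      ring
    rw [hq]
    have hkey : w ⬝ᵥ w ≤ x ⬝ᵥ x := key_decay F hF x ht
    have hpos : 0 < w ⬝ᵥ (S0 *ᵥ w) := by
      have := hS0.dotProduct_mulVec_pos hwne
      rwa [star_trivial] at this
    have hnn : 0 ≤ L⁻¹ * (x ⬝ᵥ x - w ⬝ᵥ w) :=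
      mul_nonneg (inv_nonneg.2 hL.le) (by linarith)
    linarith
end

section
/- (Lemma 2.) Let F be an m×m real matrix with F + Fᵀ negative semidefinite, L > 0, and Σ₀ a symmetric positive definite m×m matrix, and for t ≥ 0 let Σ_t = L⁻¹I + exp(Ft)(Σ₀ − L⁻¹I)exp(Ft)ᵀ. Then for every finite set D ⊆ ℝ^m, the sensitivity Δf_t = max_{y,z ∈ D} (y − z)ᵀ exp(Ft)ᵀ Σ_t⁻¹ exp(Ft) (y − z) is a nonincreasing function of t on [0, ∞); in particular Δf_t ≤ Δf_0 = max_{y,z ∈ D} (y − z)ᵀ Σ₀⁻¹ (y − z) for all t ≥ 0. -/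
open Matrix

/-- `Σ_t = L⁻¹I + exp(Ft)(Σ₀ − L⁻¹I)exp(Ft)ᵀ`. -/
noncomputable def sigmaT {m : ℕ} (F : Matrix (Fin m) (Fin m) ℝ) (L : ℝ)
    (S0 : Matrix (Fin m) (Fin m) ℝ) (t : ℝ) : Matrix (Fin m) (Fin m) ℝ :=
  L⁻¹ • 1 + NormedSpace.exp (t • F) * (S0 - L⁻¹ • 1) * (NormedSpace.exp (t • F))ᵀ

/-- The sensitivity `Δf_t = max_{y,z ∈ D} (y − z)ᵀ exp(Ft)ᵀ Σ_t⁻¹ exp(Ft) (y − z)` for a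
nonempty finite set `D ⊆ ℝ^m`. -/
noncomputable def sensitivity {m : ℕ} (F : Matrix (Fin m) (Fin m) ℝ) (L : ℝ)
    (S0 : Matrix (Fin m) (Fin m) ℝ) (D : Finset (Fin m → ℝ)) (hD : D.Nonempty) (t : ℝ) : ℝ :=
  (D ×ˢ D).sup' (hD.product hD) fun p =>
    (p.1 - p.2) ⬝ᵥ
      (((NormedSpace.exp (t • F))ᵀ * (sigmaT F L S0 t)⁻¹ * NormedSpace.exp (t • F)) *ᵥ
        (p.1 - p.2))

section ExpDeriv
attribute [local instance] Matrix.linftyOpNormedRing Matrix.linftyOpNormedAlgebra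

lemma exp_entry_hasDerivAt {m : ℕ} (B : Matrix (Fin m) (Fin m) ℝ) (i j : Fin m) (t : ℝ) :
    HasDerivAt (fun s : ℝ => NormedSpace.exp (s • B) i j)
      ((NormedSpace.exp (t • B) * B) i j) t := by
  have h := hasDerivAt_exp_smul_const (𝕂 := ℝ) B t
  let e : Matrix (Fin m) (Fin m) ℝ →ₗ[ℝ] ℝ :=
    { toFun := fun M => M i j, map_add' := fun _ _ => rfl, map_smul' := fun _ _ => rfl }
  exact (e.toContinuousLinearMap.hasFDerivAt
    (x := NormedSpace.exp (t • B))).comp_hasDerivAt t h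

end ExpDeriv

lemma exp_mul_exp_neg {m : ℕ} (F : Matrix (Fin m) (Fin m) ℝ) (t : ℝ) :
    NormedSpace.exp (t • F) * NormedSpace.exp (t • (-F)) = 1 := by
  have h : Commute (t • F) (t • (-F)) :=
    (((Commute.refl F).neg_right).smul_left t).smul_right t
  rw [← Matrix.exp_add_of_commute _ _ h, smul_neg, add_neg_cancel, NormedSpace.exp_zero]

lemma exp_neg_mul_exp {m : ℕ} (F : Matrix (Fin m) (Fin m) ℝ) (t : ℝ) :
    NormedSpace.exp (t • (-F)) * NormedSpace.exp (t • F) = 1 := by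
  have h : Commute (t • (-F)) (t • F) :=
    (((Commute.refl F).neg_left).smul_left t).smul_right t
  rw [← Matrix.exp_add_of_commute _ _ h, smul_neg, neg_add_cancel, NormedSpace.exp_zero]

lemma dot_AAt {m : ℕ} (A : Matrix (Fin m) (Fin m) ℝ) (x : Fin m → ℝ) :
    x ⬝ᵥ ((A * Aᵀ) *ᵥ x) = ∑ j, (∑ i, x i * A i j) ^ 2 := by
  rw [← Matrix.mulVec_mulVec, Matrix.dotProduct_mulVec, Matrix.mulVec_transpose]
  simp [dotProduct, Matrix.vecMul, pow_two]

lemma qfG_mono {m : ℕ} {F : Matrix (Fin m) (Fin m) ℝ} (hF : (-(F + Fᵀ)).PosSemidef)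
    (x : Fin m → ℝ) :
    Monotone fun t : ℝ =>
      x ⬝ᵥ ((NormedSpace.exp (t • (-F)) * (NormedSpace.exp (t • (-F)))ᵀ) *ᵥ x) := by
  set E : ℝ → Matrix (Fin m) (Fin m) ℝ := fun s => NormedSpace.exp (s • (-F)) with hE
  have funeq : (fun t : ℝ => x ⬝ᵥ ((E t * (E t)ᵀ) *ᵥ x)) =
      fun t : ℝ => ∑ j, (∑ i, x i * E t i j) ^ 2 := funext fun t => dot_AAt (E t) x
  have key : ∀ t : ℝ, HasDerivAt (fun s : ℝ => ∑ j, (∑ i, x i * E s i j) ^ 2)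
      (∑ j, (2 : ℕ) * (∑ i, x i * E t i j) ^ (2 - 1) * (∑ i, x i * (E t * (-F)) i j)) t := by
    intro t
    refine HasDerivAt.fun_sum fun j _ => ?_
    have h1 : HasDerivAt (fun s => ∑ i, x i * E s i j)
        (∑ i, x i * (E t * (-F)) i j) t :=
      HasDerivAt.fun_sum fun i _ => (exp_entry_hasDerivAt (-F) i j t).const_mul (x i)
    exact h1.pow 2
  have hnn : ∀ t : ℝ,
      0 ≤ ∑ j, (2 : ℕ) * (∑ i, x i * E t i j) ^ (2 - 1) * (∑ i, x i * (E t * (-F)) i j) := by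
    intro t
    set w : Fin m → ℝ := x ᵥ* E t with hw
    have hsum : (∑ j, (2 : ℕ) * (∑ i, x i * E t i j) ^ (2 - 1) * (∑ i, x i * (E t * (-F)) i j))
        = 2 * (w ⬝ᵥ (w ᵥ* (-F))) := by
      have h1 : ∀ j, (∑ i, x i * E t i j) = w j := by
        intro j; simp [hw, Matrix.vecMul, dotProduct]
      have h2 : ∀ j, (∑ i, x i * (E t * (-F)) i j) = (w ᵥ* (-F)) j := by
        intro j
        rw [hw, Matrix.vecMul_vecMul]
        simp [Matrix.vecMul, dotProduct]
      simp_rw [h1, h2]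
      simp only [dotProduct, Finset.mul_sum, pow_one, Nat.cast_ofNat]
      exact Finset.sum_congr rfl fun j _ => by ring
    rw [hsum]
    have hps := hF.dotProduct_mulVec_nonneg w
    have hstar : star w = w := by
      funext i; exact star_trivial _
    rw [hstar] at hps
    have hrw : w ⬝ᵥ ((-(F + Fᵀ)) *ᵥ w) = 2 * (w ⬝ᵥ (w ᵥ* (-F))) := by
      have hsymm : w ⬝ᵥ (Fᵀ *ᵥ w) = w ⬝ᵥ (F *ᵥ w) := by
        rw [Matrix.dotProduct_mulVec, Matrix.vecMul_transpose, dotProduct_comm]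
      have hvm : w ᵥ* (-F) = (-F)ᵀ *ᵥ w := (Matrix.mulVec_transpose (-F) w).symm
      rw [hvm]
      simp [Matrix.neg_mulVec, Matrix.add_mulVec, dotProduct_neg, dotProduct_add,
        Matrix.transpose_neg]
      rw [hsymm]; ring
    rw [← hrw]
    exact hps
  rw [funeq]
  exact monotone_of_deriv_nonneg (fun t => (key t).differentiableAt)
    (fun t => by rw [(key t).deriv]; exact hnn t)

/-- Auxiliary matrix `N t = S0 + L⁻¹ • (exp(-tF) exp(-tF)ᵀ − 1)`, satisfying
`N t = exp(tF)⁻¹ Σ_t exp(tF)ᵀ⁻¹`. -/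
noncomputable def auxN {m : ℕ} (F : Matrix (Fin m) (Fin m) ℝ) (L : ℝ)
    (S0 : Matrix (Fin m) (Fin m) ℝ) (t : ℝ) : Matrix (Fin m) (Fin m) ℝ :=
  S0 + L⁻¹ • (NormedSpace.exp (t • (-F)) * (NormedSpace.exp (t • (-F)))ᵀ - 1)

lemma auxN_qf {m : ℕ} (F : Matrix (Fin m) (Fin m) ℝ) (L : ℝ)
    (S0 : Matrix (Fin m) (Fin m) ℝ) (t : ℝ) (x : Fin m → ℝ) :
    x ⬝ᵥ (auxN F L S0 t *ᵥ x) = x ⬝ᵥ (S0 *ᵥ x) +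
      L⁻¹ * (x ⬝ᵥ ((NormedSpace.exp (t • (-F)) * (NormedSpace.exp (t • (-F)))ᵀ) *ᵥ x)
        - x ⬝ᵥ x) := by
  simp [auxN, Matrix.add_mulVec, Matrix.smul_mulVec, Matrix.sub_mulVec,
    dotProduct_add, dotProduct_smul, dotProduct_sub, smul_eq_mul,
    mul_sub]

lemma auxN_qf_mono {m : ℕ} {F : Matrix (Fin m) (Fin m) ℝ} (hF : (-(F + Fᵀ)).PosSemidef)
    {L : ℝ} (hL : 0 < L) (S0 : Matrix (Fin m) (Fin m) ℝ) (x : Fin m → ℝ)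
    {s t : ℝ} (hst : s ≤ t) :
    x ⬝ᵥ (auxN F L S0 s *ᵥ x) ≤ x ⬝ᵥ (auxN F L S0 t *ᵥ x) := by
  rw [auxN_qf, auxN_qf]
  have := qfG_mono hF x hst
  have hc : (0:ℝ) ≤ L⁻¹ := by positivity
  nlinarith [this]

lemma auxN_posDef {m : ℕ} {F : Matrix (Fin m) (Fin m) ℝ} (hF : (-(F + Fᵀ)).PosSemidef)
    {L : ℝ} (hL : 0 < L) {S0 : Matrix (Fin m) (Fin m) ℝ} (hS0 : S0.PosDef)
    {t : ℝ} (ht : 0 ≤ t) : (auxN F L S0 t).PosDef := by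
  refine Matrix.PosDef.of_dotProduct_mulVec_pos ?_ ?_
  · have hG : (NormedSpace.exp (t • (-F)) * (NormedSpace.exp (t • (-F)))ᵀ).IsHermitian := by
      rw [Matrix.IsHermitian, Matrix.conjTranspose_eq_transpose_of_trivial,
        Matrix.transpose_mul, Matrix.transpose_transpose]
    rw [Matrix.IsHermitian, auxN, Matrix.conjTranspose_add, hS0.1, Matrix.conjTranspose_smul,
      Matrix.conjTranspose_sub, Matrix.conjTranspose_one, hG, star_trivial]
  · intro x hx
    have hstar : star x = x := by funext i; exact star_trivial _
    rw [hstar, auxN_qf]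
    have h0 : x ⬝ᵥ x ≤
        x ⬝ᵥ ((NormedSpace.exp (t • (-F)) * (NormedSpace.exp (t • (-F)))ᵀ) *ᵥ x) := by
      have := qfG_mono hF x ht
      simpa [NormedSpace.exp_zero] using this
    have hS := hS0.dotProduct_mulVec_pos hx
    rw [hstar] at hS
    have hc : (0:ℝ) ≤ L⁻¹ := by positivity
    nlinarith

lemma sigmaT_eq_conj {m : ℕ} (F : Matrix (Fin m) (Fin m) ℝ) (L : ℝ)
    (S0 : Matrix (Fin m) (Fin m) ℝ) (t : ℝ) :
    sigmaT F L S0 t =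
      NormedSpace.exp (t • F) * auxN F L S0 t * (NormedSpace.exp (t • F))ᵀ := by
  set E := NormedSpace.exp (t • F) with hEdef
  set En := NormedSpace.exp (t • (-F)) with hEndef
  have h1 : E * En = 1 := exp_mul_exp_neg F t
  have h2 : Enᵀ * Eᵀ = 1 := by rw [← Matrix.transpose_mul, h1, Matrix.transpose_one]
  have h3 : E * (En * Enᵀ) * Eᵀ = 1 := by
    rw [← mul_assoc, h1, one_mul, h2]
  rw [sigmaT, auxN, ← hEdef, ← hEndef]
  have h4 : E * (En * Enᵀ - 1) * Eᵀ = 1 - E * Eᵀ := by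
    rw [mul_sub, sub_mul, mul_one, h3]
  have h5 : E * (L⁻¹ • (1 : Matrix (Fin m) (Fin m) ℝ)) * Eᵀ = L⁻¹ • (E * Eᵀ) := by
    rw [mul_smul_comm, smul_mul_assoc, mul_one]
  rw [mul_add, add_mul, mul_sub, sub_mul, h5, mul_smul_comm, smul_mul_assoc, h4, smul_sub]
  abel

lemma conj_inv_eq {m : ℕ} (F : Matrix (Fin m) (Fin m) ℝ) (L : ℝ)
    (S0 : Matrix (Fin m) (Fin m) ℝ) (t : ℝ) :
    (NormedSpace.exp (t • F))ᵀ * (sigmaT F L S0 t)⁻¹ * NormedSpace.exp (t • F) =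
      (auxN F L S0 t)⁻¹ := by
  set E := NormedSpace.exp (t • F) with hEdef
  set En := NormedSpace.exp (t • (-F)) with hEndef
  have h1 : E * En = 1 := exp_mul_exp_neg F t
  have h1' : En * E = 1 := exp_neg_mul_exp F t
  have h2 : Eᵀ * Enᵀ = 1 := by rw [← Matrix.transpose_mul, h1', Matrix.transpose_one]
  have hEinv : E⁻¹ = En := Matrix.inv_eq_right_inv h1
  have hEtinv : (Eᵀ)⁻¹ = Enᵀ := Matrix.inv_eq_right_inv h2
  rw [sigmaT_eq_conj, Matrix.mul_inv_rev, Matrix.mul_inv_rev, hEinv, hEtinv]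
  calc Eᵀ * (Enᵀ * ((auxN F L S0 t)⁻¹ * En)) * E
      = (Eᵀ * Enᵀ) * (auxN F L S0 t)⁻¹ * (En * E) := by
        simp only [mul_assoc]
    _ = (auxN F L S0 t)⁻¹ := by rw [h2, h1', one_mul, mul_one]

lemma var_ineq {m : ℕ} {A : Matrix (Fin m) (Fin m) ℝ} (hA : A.PosDef) (x y : Fin m → ℝ) :
    2 * (x ⬝ᵥ y) - y ⬝ᵥ (A *ᵥ y) ≤ x ⬝ᵥ (A⁻¹ *ᵥ x) := by
  have hAinv : A * A⁻¹ = 1 := Matrix.mul_nonsing_inv A hA.det_pos.ne'.isUnit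
  have hAT : Aᵀ = A := by
    rw [← Matrix.conjTranspose_eq_transpose_of_trivial, hA.1]
  set z : Fin m → ℝ := y - A⁻¹ *ᵥ x with hz
  have h0 : 0 ≤ z ⬝ᵥ (A *ᵥ z) := by
    have := hA.posSemidef.dotProduct_mulVec_nonneg z
    have hstar : star z = z := by funext i; exact star_trivial _
    rwa [hstar] at this
  have hAAix : A *ᵥ (A⁻¹ *ᵥ x) = x := by
    rw [Matrix.mulVec_mulVec, hAinv, Matrix.one_mulVec]
  have hterm : (A⁻¹ *ᵥ x) ⬝ᵥ (A *ᵥ y) = x ⬝ᵥ y := by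
    rw [Matrix.dotProduct_mulVec, ← Matrix.mulVec_transpose, hAT, hAAix]
  have hterm2 : (A⁻¹ *ᵥ x) ⬝ᵥ x = x ⬝ᵥ (A⁻¹ *ᵥ x) := dotProduct_comm _ _
  have hyx : y ⬝ᵥ x = x ⬝ᵥ y := dotProduct_comm _ _
  have hexp : z ⬝ᵥ (A *ᵥ z) =
      y ⬝ᵥ (A *ᵥ y) - x ⬝ᵥ y - x ⬝ᵥ y + x ⬝ᵥ (A⁻¹ *ᵥ x) := by
    rw [hz]
    rw [Matrix.mulVec_sub, hAAix, sub_dotProduct, dotProduct_sub,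
      dotProduct_sub, hterm, hterm2, hyx]
    ring
  rw [hexp] at h0
  linarith

lemma inv_qf_anti {m : ℕ} {A B : Matrix (Fin m) (Fin m) ℝ} (hA : A.PosDef) (hB : B.PosDef)
    (hle : ∀ y, y ⬝ᵥ (A *ᵥ y) ≤ y ⬝ᵥ (B *ᵥ y)) (x : Fin m → ℝ) :
    x ⬝ᵥ (B⁻¹ *ᵥ x) ≤ x ⬝ᵥ (A⁻¹ *ᵥ x) := by
  have hBinv : B * B⁻¹ = 1 := Matrix.mul_nonsing_inv B hB.det_pos.ne'.isUnit
  set y : Fin m → ℝ := B⁻¹ *ᵥ x with hy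
  have hBy : B *ᵥ y = x := by rw [hy, Matrix.mulVec_mulVec, hBinv, Matrix.one_mulVec]
  have hyBy : y ⬝ᵥ (B *ᵥ y) = x ⬝ᵥ y := by
    rw [hBy, dotProduct_comm]
  have h1 : x ⬝ᵥ (B⁻¹ *ᵥ x) = 2 * (x ⬝ᵥ y) - y ⬝ᵥ (B *ᵥ y) := by
    rw [hyBy]; ring
  rw [h1]
  calc 2 * (x ⬝ᵥ y) - y ⬝ᵥ (B *ᵥ y) ≤ 2 * (x ⬝ᵥ y) - y ⬝ᵥ (A *ᵥ y) := by
        have := hle y; linarith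
    _ ≤ x ⬝ᵥ (A⁻¹ *ᵥ x) := var_ineq hA x y

/-- Lemma 2: if `F + Fᵀ` is negative semidefinite, `L > 0` and `Σ₀` is symmetric positive
definite, then the sensitivity `Δf_t` is nonincreasing in `t` on `[0, ∞)`; in particular
`Δf_t ≤ Δf_0 = max_{y,z ∈ D} (y − z)ᵀ Σ₀⁻¹ (y − z)` for all `t ≥ 0`. -/
theorem sensitivity_antitoneOn {m : ℕ} (F : Matrix (Fin m) (Fin m) ℝ)
    (hF : (-(F + Fᵀ)).PosSemidef) (L : ℝ) (hL : 0 < L)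
    (S0 : Matrix (Fin m) (Fin m) ℝ) (hS0 : S0.PosDef)
    (D : Finset (Fin m → ℝ)) (hD : D.Nonempty) :
    AntitoneOn (sensitivity F L S0 D hD) (Set.Ici 0) ∧
    (∀ t : ℝ, 0 ≤ t → sensitivity F L S0 D hD t ≤ sensitivity F L S0 D hD 0) ∧
    sensitivity F L S0 D hD 0 =
      (D ×ˢ D).sup' (hD.product hD) fun p => (p.1 - p.2) ⬝ᵥ (S0⁻¹ *ᵥ (p.1 - p.2)) := by
  have hanti : AntitoneOn (sensitivity F L S0 D hD) (Set.Ici 0) := by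
    intro s hs t ht hst
    simp only [Set.mem_Ici] at hs ht
    unfold sensitivity
    apply Finset.sup'_le
    intro p hp
    calc (p.1 - p.2) ⬝ᵥ
          (((NormedSpace.exp (t • F))ᵀ * (sigmaT F L S0 t)⁻¹ * NormedSpace.exp (t • F)) *ᵥ
            (p.1 - p.2))
        = (p.1 - p.2) ⬝ᵥ ((auxN F L S0 t)⁻¹ *ᵥ (p.1 - p.2)) := by rw [conj_inv_eq]
      _ ≤ (p.1 - p.2) ⬝ᵥ ((auxN F L S0 s)⁻¹ *ᵥ (p.1 - p.2)) :=
          inv_qf_anti (auxN_posDef hF hL hS0 hs) (auxN_posDef hF hL hS0 (hs.trans hst))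
            (fun y => auxN_qf_mono hF hL S0 y hst) _
      _ = (p.1 - p.2) ⬝ᵥ
          (((NormedSpace.exp (s • F))ᵀ * (sigmaT F L S0 s)⁻¹ * NormedSpace.exp (s • F)) *ᵥ
            (p.1 - p.2)) := by rw [conj_inv_eq]
      _ ≤ _ := Finset.le_sup' (fun p : (Fin m → ℝ) × (Fin m → ℝ) => (p.1 - p.2) ⬝ᵥ
          (((NormedSpace.exp (s • F))ᵀ * (sigmaT F L S0 s)⁻¹ * NormedSpace.exp (s • F)) *ᵥ
            (p.1 - p.2))) hp
  refine ⟨hanti, fun t ht => hanti (Set.mem_Ici.2 le_rfl) (Set.mem_Ici.2 ht) ht, ?_⟩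
  have hmat : (NormedSpace.exp ((0:ℝ) • F))ᵀ * (sigmaT F L S0 0)⁻¹ *
      NormedSpace.exp ((0:ℝ) • F) = S0⁻¹ := by
    have hS : sigmaT F L S0 0 = S0 := by
      simp [sigmaT, NormedSpace.exp_zero]
    simp [NormedSpace.exp_zero, hS]
  unfold sensitivity
  simp only [hmat]
end
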